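/- Let f be a bent function on F_2^n and Γ a linear hyperplane of F_2^n. Then the restriction h of f to Γ, viewed as a Boolean function in n−1 variables, is a 1-plateaued function (i.e., W_h(y) ∈ {0, ±2^{n/2}} for all y ∈ F_2^{n-1}). -/

import Mathlib

/-- Inner product on the Boolean cube. -/
def ip {n : ℕ} (x y : Fin n → ZMod 2) : ZMod 2 := ∑ i, x i * y i

/-- Walsh–Hadamard transform of a Boolean function. -/
def W {n : ℕ} (f : (Fin n → ZMod 2) → ZMod 2) (y : Fin n → ZMod 2) : ℤ :=
  ∑ x, (-1 : ℤ) ^ (f x + ip x y).val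

/-- A Boolean function is bent if all its Walsh–Hadamard values are `±2^(n/2)`. -/
def IsBent {n : ℕ} (f : (Fin n → ZMod 2) → ZMod 2) : Prop :=
  ∀ y, W f y = 2 ^ (n / 2) ∨ W f y = -2 ^ (n / 2)

lemma chi_add (s t : ZMod 2) : (-1 : ℤ) ^ (s + t).val = (-1) ^ s.val * (-1) ^ t.val := by
  revert s t; decide

lemma chi_indicator (t : ZMod 2) : (1 : ℤ) + (-1) ^ t.val = if t = 0 then 2 else 0 := by
  revert t; decide

/-- `ip · y` as a linear map. -/
def ipL {m : ℕ} (y : Fin m → ZMod 2) : (Fin m → ZMod 2) →ₗ[ZMod 2] ZMod 2 where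
  toFun x := ip x y
  map_add' x x' := by simp [ip, add_mul, Finset.sum_add_distrib]
  map_smul' c x := by simp [ip, Finset.mul_sum, mul_assoc, smul_eq_mul]

lemma ip_add_right {m : ℕ} (x a b : Fin m → ZMod 2) :
    ip x (a + b) = ip x a + ip x b := by
  simp [ip, mul_add, Finset.sum_add_distrib]

lemma exists_ip {m : ℕ} (φ : (Fin m → ZMod 2) →ₗ[ZMod 2] ZMod 2) :
    ∃ a, ∀ x, φ x = ip x a := by
  refine ⟨fun i => φ (fun j => if i = j then 1 else 0), fun x => ?_⟩
  rw [LinearMap.pi_apply_eq_sum_univ]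
  simp [ip, smul_eq_mul]

theorem stmt9 (n : ℕ) (hn : Even n) (hn2 : 2 ≤ n)
    (f : (Fin n → ZMod 2) → ZMod 2) (hf : IsBent f)
    (Γ : Submodule (ZMod 2) (Fin n → ZMod 2))
    (hΓ : Module.finrank (ZMod 2) Γ = n - 1)
    (e : (Fin (n - 1) → ZMod 2) ≃ₗ[ZMod 2] Γ) :
    ∀ y, W (fun x => f (e x : Fin n → ZMod 2)) y = 0 ∨
      W (fun x => f (e x : Fin n → ZMod 2)) y = 2 ^ (n / 2) ∨
      W (fun x => f (e x : Fin n → ZMod 2)) y = -2 ^ (n / 2) := by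
  classical
  intro y
  -- a linear functional on the whole space with kernel exactly Γ
  have hfr : Module.finrank (ZMod 2) (Fin n → ZMod 2) = n := Module.finrank_fin_fun _
  have hq : Module.finrank (ZMod 2) ((Fin n → ZMod 2) ⧸ Γ) = 1 := by
    have h := Submodule.finrank_quotient_add_finrank Γ
    rw [hfr, hΓ] at h
    omega
  obtain ⟨q⟩ : Nonempty (((Fin n → ZMod 2) ⧸ Γ) ≃ₗ[ZMod 2] ZMod 2) := by
    apply FiniteDimensional.nonempty_linearEquiv_of_finrank_eq
    rw [hq, Module.finrank_self]
  set g : (Fin n → ZMod 2) →ₗ[ZMod 2] ZMod 2 := q.toLinearMap ∘ₗ Γ.mkQ with hg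
  obtain ⟨c, hc⟩ := exists_ip g
  have hmem : ∀ u, u ∈ Γ ↔ ip u c = 0 := by
    intro u
    rw [← hc]
    simp only [hg, LinearMap.comp_apply, LinearEquiv.coe_coe,
      EmbeddingLike.map_eq_zero_iff]
    exact (Submodule.Quotient.mk_eq_zero Γ).symm
  -- extend `x ↦ ip x y` (transported along `e`) to a functional `ip · a` on the whole space
  obtain ⟨Wc, hWc⟩ := Submodule.exists_isCompl Γ
  set π := Γ.projectionOnto Wc hWc with hπ
  set ψ : Γ →ₗ[ZMod 2] ZMod 2 := (ipL y) ∘ₗ e.symm.toLinearMap with hψ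
  obtain ⟨a, ha⟩ := exists_ip (ψ ∘ₗ π)
  have hrestr : ∀ x : Fin (n - 1) → ZMod 2, ip (e x : Fin n → ZMod 2) a = ip x y := by
    intro x
    rw [← ha]
    simp [hψ, hπ, Submodule.projectionOnto_apply_left, ipL]
    rfl
  -- the key identity : W f a + W f (a + c) = 2 * W h y
  have key : W f a + W f (a + c) = 2 * W (fun x => f (e x : Fin n → ZMod 2)) y := by
    have step1 : W f a + W f (a + c)
        = ∑ u : Fin n → ZMod 2, (if ip u c = 0 then
            2 * (-1 : ℤ) ^ (f u + ip u a).val else 0) := by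
      unfold W
      rw [← Finset.sum_add_distrib]
      refine Finset.sum_congr rfl fun u _ => ?_
      have h2 : (-1 : ℤ) ^ (f u + ip u (a + c)).val
          = (-1) ^ (f u + ip u a).val * (-1) ^ (ip u c).val := by
        rw [ip_add_right, ← add_assoc]; exact chi_add _ _
      rw [h2]
      have hz : (ip u c) = 0 ∨ (ip u c) = 1 := by
        have : ∀ z : ZMod 2, z = 0 ∨ z = 1 := by decide
        exact this _
      rcases hz with h | h <;> simp [h, ZMod.val_one] <;> ring
    rw [step1]
    rw [← Finset.sum_filter]
    rw [Finset.sum_subtype (Finset.univ.filter (fun u => ip u c = 0))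
      (p := fun u => u ∈ Γ)
      (by intro u; simp [hmem u]) (fun u => 2 * (-1 : ℤ) ^ (f u + ip u a).val)]
    unfold W
    rw [Finset.mul_sum]
    refine (Fintype.sum_equiv e.toEquiv _ _ fun x => ?_).symm
    simp only [LinearEquiv.coe_toEquiv]
    rw [hrestr x]
  -- conclude
  obtain h1 | h1 := hf a <;> obtain h2 | h2 := hf (a + c) <;>
    [skip; skip; skip; skip] <;>
  · rw [h1, h2] at key
    set Wh := W (fun x => f (e x : Fin n → ZMod 2)) y with hWh
    set P : ℤ := 2 ^ (n / 2) with hP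
    omega
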